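/- Let J be a closed two-sided ideal in a C*-algebra C with J² dense in J (equivalently, J = closure of J·J, which holds automatically for C*-ideals), and suppose Δ : C → C ⊗ C satisfies Δ(J) ⊆ J ⊗ C and Δ(J) ⊆ C ⊗ J, where J ⊗ C, C ⊗ J, J ⊗ J denote closed ideals in the minimal tensor product. Then Δ(J) ⊆ J ⊗ J. -/
import Mathlib


/-- Let `J` be a closed two-sided ideal in a C*-algebra `C` with `J²` dense
in `J`, and let `Δ : C → T` be a (continuous, unital) *-homomorphism into a C*-algebra `T`
(modeling the minimal tensor product `C ⊗ C`).  Suppose `I₁, I₂, I₃` are closed two-sided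
ideals of `T` (modeling `J ⊗ C`, `C ⊗ J` and `J ⊗ J`) with `I₁ · I₂ ⊆ I₃`, and that
`Δ(J) ⊆ I₁` and `Δ(J) ⊆ I₂`.  Then `Δ(J) ⊆ I₃`. -/
theorem stmt_7
    (C T : Type) [NormedRing C] [StarRing C] [CStarRing C] [NormedAlgebra ℂ C]
    [StarModule ℂ C] [CompleteSpace C]
    [NormedRing T] [StarRing T] [CStarRing T] [NormedAlgebra ℂ T]
    [StarModule ℂ T] [CompleteSpace T]
    (J : Ideal C) (hJclosed : IsClosed (J : Set C))
    (hJright : ∀ a ∈ J, ∀ c : C, a * c ∈ J)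
    (hJsq : (J : Set C) ⊆
      closure ((Submodule.span ℂ {x : C | ∃ a ∈ J, ∃ b ∈ J, x = a * b} : Submodule ℂ C) : Set C))
    (Δ : C →⋆ₐ[ℂ] T) (hΔcont : Continuous Δ)
    (I₁ I₂ I₃ : Ideal T)
    (hI₁closed : IsClosed (I₁ : Set T)) (hI₂closed : IsClosed (I₂ : Set T))
    (hI₃closed : IsClosed (I₃ : Set T))
    (hI₁right : ∀ x ∈ I₁, ∀ t : T, x * t ∈ I₁)
    (hI₂right : ∀ x ∈ I₂, ∀ t : T, x * t ∈ I₂)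
    (hI₃right : ∀ x ∈ I₃, ∀ t : T, x * t ∈ I₃)
    (hmul : ∀ x ∈ I₁, ∀ y ∈ I₂, x * y ∈ I₃)
    (h₁ : ∀ a ∈ J, Δ a ∈ I₁) (h₂ : ∀ a ∈ J, Δ a ∈ I₂) :
    ∀ a ∈ J, Δ a ∈ I₃ := by
  intro a ha
  set S : Submodule ℂ C :=
    Submodule.span ℂ {x : C | ∃ a ∈ J, ∃ b ∈ J, x = a * b} with hS
  have hmap : ∀ x ∈ S, Δ x ∈ I₃ := by
    intro x hx
    refine Submodule.span_induction ?_ ?_ ?_ ?_ hx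
    · rintro y ⟨p, hp, q, hq, rfl⟩
      rw [map_mul]
      exact hmul _ (h₁ p hp) _ (h₂ q hq)
    · simp
    · intro y z _ _ hy hz
      rw [map_add]; exact I₃.add_mem hy hz
    · intro c y _ hy
      rw [map_smul]
      rw [Algebra.smul_def]; exact I₃.smul_mem (algebraMap ℂ T c) hy
  have h1 : Δ a ∈ closure ((I₃ : Set T)) := by
    have : a ∈ closure (S : Set C) := hJsq ha
    have h2 : Δ a ∈ closure (Δ '' (S : Set C)) :=
      (image_closure_subset_closure_image hΔcont) ⟨a, this, rfl⟩
    refine closure_mono ?_ h2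
    rintro _ ⟨x, hx, rfl⟩
    exact hmap x hx
  rwa [hI₃closed.closure_eq] at h1
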